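/- Let λ > 0 and let x, y, z, t > 0 satisfy |z − x| ≤ 3t. Then P_t(x,y) ≤ 19^{λ+1} P_t(z,y). -/
import Mathlib


open MeasureTheory Set ENNReal

/-- The Bessel Poisson kernel given by Weinstein's formula. -/
noncomputable def PK (lam t x y : ℝ) : ℝ :=
  (2 * lam * t / Real.pi) *
    ∫ θ in Set.Ioo (0 : ℝ) Real.pi,
      Real.sin θ ^ (2 * lam - 1) *
        (x ^ 2 + y ^ 2 + t ^ 2 - 2 * x * y * Real.cos θ) ^ (-(lam + 1))

/-- The Poisson extension `P_σ f (x, t)` of a nonnegative function on `ℝ₊`. -/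
noncomputable def Pfwd (lam : ℝ) (σ : Measure ℝ) (f : ℝ → ℝ≥0∞) (x t : ℝ) : ℝ≥0∞ :=
  ∫⁻ y in Set.Ioi (0 : ℝ), ENNReal.ofReal (PK lam t x y) * f y ∂σ

/-- The adjoint operator `P*_μ g (y)` of a nonnegative function on `ℝ²₊₊`. -/
noncomputable def Padj (lam : ℝ) (μ : Measure (ℝ × ℝ)) (g : ℝ × ℝ → ℝ≥0∞) (y : ℝ) : ℝ≥0∞ :=
  ∫⁻ p in Set.Ioi (0 : ℝ) ×ˢ Set.Ioi (0 : ℝ), ENNReal.ofReal (PK lam p.2 p.1 y) * g p ∂μ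

/-- The triple `3I` of the interval `I = (a, b)`, intersected with `ℝ₊`. -/
def tri (a b : ℝ) : Set ℝ :=
  Set.Ioo ((a + b) / 2 - 3 * (b - a) / 2) ((a + b) / 2 + 3 * (b - a) / 2) ∩ Set.Ioi 0

/-- The Carleson box `Î = I × [0, |I|]` of the interval `I = (a, b)`. -/
def boxI (a b : ℝ) : Set (ℝ × ℝ) := Set.Ioo a b ×ˢ Set.Icc 0 (b - a)

/-- The enlarged box `3Î = 3I × [0, 3|I|]` of the interval `I = (a, b)`. -/
def boxI3 (a b : ℝ) : Set (ℝ × ℝ) := tri a b ×ˢ Set.Icc 0 (3 * (b - a))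

/-- The two-weight norm inequality for the Bessel Poisson operator with constant `N`,
for nonnegative `f ∈ L²(ℝ₊; σ)`. -/
def NormIneq (lam : ℝ) (σ : Measure ℝ) (μ : Measure (ℝ × ℝ)) (N : ℝ≥0∞) : Prop :=
  ∀ f : ℝ → ℝ≥0∞, Measurable f → (∫⁻ y in Set.Ioi (0 : ℝ), f y ^ 2 ∂σ) < ∞ →
    (∫⁻ p in Set.Ioi (0 : ℝ) ×ˢ Set.Ioi (0 : ℝ), Pfwd lam σ f p.1 p.2 ^ 2 ∂μ)
      ≤ N ^ 2 * ∫⁻ y in Set.Ioi (0 : ℝ), f y ^ 2 ∂σ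

/-- The dual two-weight norm inequality with constant `N`, for nonnegative
`g ∈ L²(ℝ²₊₊; μ)`. -/
def DualNormIneq (lam : ℝ) (σ : Measure ℝ) (μ : Measure (ℝ × ℝ)) (N : ℝ≥0∞) : Prop :=
  ∀ g : ℝ × ℝ → ℝ≥0∞, Measurable g →
    (∫⁻ p in Set.Ioi (0 : ℝ) ×ˢ Set.Ioi (0 : ℝ), g p ^ 2 ∂μ) < ∞ →
    (∫⁻ y in Set.Ioi (0 : ℝ), Padj lam μ g y ^ 2 ∂σ)
      ≤ N ^ 2 * ∫⁻ p in Set.Ioi (0 : ℝ) ×ˢ Set.Ioi (0 : ℝ), g p ^ 2 ∂μ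

/-- The forward testing condition with constant `F`:
`∫_{3Î} (P_σ 1_I)² dμ ≤ F² σ(I)` for every bounded interval `I ⊂ ℝ₊`. -/
def FwdTesting (lam : ℝ) (σ : Measure ℝ) (μ : Measure (ℝ × ℝ)) (F : ℝ≥0∞) : Prop :=
  ∀ a b : ℝ, 0 ≤ a → a < b →
    (∫⁻ p in boxI3 a b, Pfwd lam σ ((Set.Ioo a b).indicator 1) p.1 p.2 ^ 2 ∂μ)
      ≤ F ^ 2 * σ (Set.Ioo a b)

/-- The backward testing condition with constant `B`:
`∫_{3I} (P*_μ (t 1_Î))² dσ ≤ B² ∫_Î t² dμ` for every bounded interval `I ⊂ ℝ₊`. -/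
def BwdTesting (lam : ℝ) (σ : Measure ℝ) (μ : Measure (ℝ × ℝ)) (B : ℝ≥0∞) : Prop :=
  ∀ a b : ℝ, 0 ≤ a → a < b →
    (∫⁻ y in tri a b,
        Padj lam μ ((boxI a b).indicator fun p => ENNReal.ofReal p.2) y ^ 2 ∂σ)
      ≤ B ^ 2 * ∫⁻ p in boxI a b, ENNReal.ofReal p.2 ^ 2 ∂μ

section
open Real

lemma integrableOn_sin_rpow {r : ℝ} (hr : -1 < r) :
    IntegrableOn (fun θ => Real.sin θ ^ r) (Set.Ioo 0 Real.pi) := by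
  have hmeas : AEStronglyMeasurable (fun θ : ℝ => Real.sin θ ^ r) volume :=
    (by fun_prop : Measurable fun θ : ℝ => Real.sin θ ^ r).aestronglyMeasurable
  rcases le_or_gt 0 r with h0 | h0
  · apply Measure.integrableOn_of_bounded (M := 1) measure_Ioo_lt_top.ne hmeas
    filter_upwards [ae_restrict_mem measurableSet_Ioo] with θ hθ
    have hs := Real.sin_nonneg_of_nonneg_of_le_pi hθ.1.le hθ.2.le
    rw [Real.norm_eq_abs, abs_of_nonneg (Real.rpow_nonneg hs r)]
    exact Real.rpow_le_one hs (Real.sin_le_one θ) h0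
  · have hpi : (0:ℝ) < π := Real.pi_pos
    have h1 : IntegrableOn (fun θ => Real.sin θ ^ r) (Set.Ioc 0 (π/2)) := by
      have hbase : IntegrableOn (fun θ : ℝ => θ ^ r) (Set.Ioc 0 (π/2)) :=
        (intervalIntegrable_iff_integrableOn_Ioc_of_le (by positivity)).mp
          (intervalIntegral.intervalIntegrable_rpow' hr)
      have hg : IntegrableOn (fun θ : ℝ => (2/π)^r * θ ^ r) (Set.Ioc 0 (π/2)) :=
        hbase.const_mul _
      refine Integrable.mono hg hmeas.restrict ?_
      filter_upwards [ae_restrict_mem measurableSet_Ioc] with θ hθ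
      have hθ0 : (0:ℝ) < θ := hθ.1
      have hsin : 2/π * θ ≤ Real.sin θ := Real.mul_le_sin hθ0.le hθ.2
      have hpos : 0 < 2/π * θ := by positivity
      have hle : Real.sin θ ^ r ≤ (2/π * θ) ^ r :=
        Real.rpow_le_rpow_of_nonpos hpos hsin h0.le
      have hs : 0 ≤ Real.sin θ := le_trans hpos.le hsin
      rw [Real.norm_eq_abs, Real.norm_eq_abs,
        abs_of_nonneg (Real.rpow_nonneg hs r),
        abs_of_nonneg (mul_nonneg (Real.rpow_nonneg (by positivity) r)
          (Real.rpow_nonneg hθ0.le r))]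
      calc Real.sin θ ^ r ≤ (2/π * θ) ^ r := hle
        _ = (2/π)^r * θ^r := Real.mul_rpow (by positivity) hθ0.le
    have h2 : IntegrableOn (fun θ => Real.sin θ ^ r) (Set.Ioo (π/2) π) := by
      have hbase : IntegrableOn (fun θ : ℝ => (π - θ) ^ r) (Set.Ioc (π/2) π) := by
        have h := (intervalIntegral.intervalIntegrable_rpow' hr (a := 0) (b := π/2)).comp_sub_left π
        rw [sub_zero, (by ring : Real.pi - Real.pi/2 = Real.pi/2)] at h
        exact (intervalIntegrable_iff_integrableOn_Ioc_of_le (by linarith)).mp h.symm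
      have hg : IntegrableOn (fun θ : ℝ => (2/π)^r * (π - θ) ^ r) (Set.Ioo (π/2) π) :=
        (hbase.mono_set Set.Ioo_subset_Ioc_self).const_mul _
      refine Integrable.mono hg hmeas.restrict ?_
      filter_upwards [ae_restrict_mem measurableSet_Ioo] with θ hθ
      have hθ0 : (0:ℝ) < π - θ := by linarith [hθ.2]
      have hθ1 : π - θ ≤ π/2 := by linarith [hθ.1]
      have hsin : 2/π * (π - θ) ≤ Real.sin θ := by
        rw [← Real.sin_pi_sub]; exact Real.mul_le_sin hθ0.le hθ1
      have hpos : 0 < 2/π * (π - θ) := by positivity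
      have hle : Real.sin θ ^ r ≤ (2/π * (π - θ)) ^ r :=
        Real.rpow_le_rpow_of_nonpos hpos hsin h0.le
      have hs : 0 ≤ Real.sin θ := le_trans hpos.le hsin
      rw [Real.norm_eq_abs, Real.norm_eq_abs,
        abs_of_nonneg (Real.rpow_nonneg hs r),
        abs_of_nonneg (mul_nonneg (Real.rpow_nonneg (by positivity) r)
          (Real.rpow_nonneg hθ0.le r))]
      calc Real.sin θ ^ r ≤ (2/π * (π - θ)) ^ r := hle
        _ = (2/π)^r * (π - θ)^r := Real.mul_rpow (by positivity) hθ0.le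
    refine (h1.union h2).mono_set (fun θ hθ => ?_)
    rcases le_or_gt θ (π/2) with h | h
    · exact Or.inl ⟨hθ.1, h⟩
    · exact Or.inr ⟨h, hθ.2⟩

end

/-- Kernel comparison: if `|z − x| ≤ 3t`, then
`P_t(x, y) ≤ 19^{λ+1} P_t(z, y)`. -/
theorem bessel_poisson_kernel_comparison_high (lam : ℝ) (hlam : 0 < lam)
    (x y z t : ℝ) (hx : 0 < x) (hy : 0 < y) (hz : 0 < z) (ht : 0 < t)
    (hzx : |z - x| ≤ 3 * t) :
    PK lam t x y ≤ (19 : ℝ) ^ (lam + 1) * PK lam t z y := by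
  have habs := abs_le.mp hzx
  have h9 : (z - x)^2 ≤ 9 * t^2 := by nlinarith [habs.1, habs.2]
  -- lower bounds on the quadratic forms
  have hAx : ∀ θ : ℝ, t^2 ≤ x ^ 2 + y ^ 2 + t ^ 2 - 2 * x * y * Real.cos θ := by
    intro θ
    nlinarith [sq_nonneg (x - y * Real.cos θ),
      mul_le_mul_of_nonneg_left (Real.cos_sq_le_one θ) (sq_nonneg y)]
  have hAz : ∀ θ : ℝ, t^2 ≤ z ^ 2 + y ^ 2 + t ^ 2 - 2 * z * y * Real.cos θ := by
    intro θ
    nlinarith [sq_nonneg (z - y * Real.cos θ),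
      mul_le_mul_of_nonneg_left (Real.cos_sq_le_one θ) (sq_nonneg y)]
  have hAxp : ∀ θ : ℝ, (0:ℝ) < x ^ 2 + y ^ 2 + t ^ 2 - 2 * x * y * Real.cos θ :=
    fun θ => lt_of_lt_of_le (by positivity) (hAx θ)
  have hAzp : ∀ θ : ℝ, (0:ℝ) < z ^ 2 + y ^ 2 + t ^ 2 - 2 * z * y * Real.cos θ :=
    fun θ => lt_of_lt_of_le (by positivity) (hAz θ)
  -- the key pointwise comparison of quadratic forms
  have hkey : ∀ θ : ℝ, z ^ 2 + y ^ 2 + t ^ 2 - 2 * z * y * Real.cos θ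
      ≤ 19 * (x ^ 2 + y ^ 2 + t ^ 2 - 2 * x * y * Real.cos θ) := by
    intro θ
    have hc1 := Real.cos_le_one θ
    have hc2 := Real.neg_one_le_cos θ
    nlinarith [sq_nonneg (z - 2*x + y*Real.cos θ), sq_nonneg (x - y*Real.cos θ),
      mul_nonneg (mul_nonneg hy.le hy.le)
        (mul_nonneg (sub_nonneg.2 hc1) (by linarith : (0:ℝ) ≤ 1 + Real.cos θ)),
      sq_nonneg (z - y*Real.cos θ)]
  have h19 : (0:ℝ) < (19:ℝ) ^ (lam + 1) := Real.rpow_pos_of_pos (by norm_num) _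
  -- pointwise comparison of kernels
  have hpt : ∀ θ : ℝ,
      (x ^ 2 + y ^ 2 + t ^ 2 - 2 * x * y * Real.cos θ) ^ (-(lam + 1))
        ≤ (19:ℝ) ^ (lam + 1) *
          (z ^ 2 + y ^ 2 + t ^ 2 - 2 * z * y * Real.cos θ) ^ (-(lam + 1)) := by
    intro θ
    set Ax := x ^ 2 + y ^ 2 + t ^ 2 - 2 * x * y * Real.cos θ with hAxdef
    set Az := z ^ 2 + y ^ 2 + t ^ 2 - 2 * z * y * Real.cos θ with hAzdef
    have h1 : Az ^ (lam + 1) ≤ (19:ℝ) ^ (lam + 1) * Ax ^ (lam + 1) := by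
      rw [← Real.mul_rpow (by norm_num) (hAxp θ).le]
      exact Real.rpow_le_rpow (hAzp θ).le (hkey θ) (by linarith)
    have h2 : (0:ℝ) < Az ^ (lam + 1) := Real.rpow_pos_of_pos (hAzp θ) _
    have h3 : (0:ℝ) < Ax ^ (lam + 1) := Real.rpow_pos_of_pos (hAxp θ) _
    rw [Real.rpow_neg (hAxp θ).le, Real.rpow_neg (hAzp θ).le]
    rw [inv_le_iff_one_le_mul₀ h3]
    calc (1:ℝ) = Az ^ (lam+1) * (Az ^ (lam+1))⁻¹ := (mul_inv_cancel₀ h2.ne').symm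
      _ ≤ ((19:ℝ)^(lam+1) * Ax^(lam+1)) * (Az ^ (lam+1))⁻¹ := by
          exact mul_le_mul_of_nonneg_right h1 (inv_nonneg.2 h2.le)
      _ = (19:ℝ)^(lam+1) * (Az ^ (lam+1))⁻¹ * Ax^(lam+1) := by ring
  -- compare the integrals
  unfold PK
  have hsin_nonneg : ∀ θ ∈ Set.Ioo (0:ℝ) Real.pi, (0:ℝ) ≤ Real.sin θ :=
    fun θ hθ => Real.sin_nonneg_of_nonneg_of_le_pi hθ.1.le hθ.2.le
  have hI : (∫ θ in Set.Ioo (0:ℝ) Real.pi, Real.sin θ ^ (2*lam-1) *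
        (x ^ 2 + y ^ 2 + t ^ 2 - 2 * x * y * Real.cos θ) ^ (-(lam+1)))
      ≤ (19:ℝ)^(lam+1) * ∫ θ in Set.Ioo (0:ℝ) Real.pi, Real.sin θ ^ (2*lam-1) *
        (z ^ 2 + y ^ 2 + t ^ 2 - 2 * z * y * Real.cos θ) ^ (-(lam+1)) := by
    rw [← integral_const_mul]
    refine integral_mono_of_nonneg ?_ ?_ ?_
    · filter_upwards [ae_restrict_mem measurableSet_Ioo] with θ hθ
      exact mul_nonneg (Real.rpow_nonneg (hsin_nonneg θ hθ) _)
        (Real.rpow_nonneg (hAxp θ).le _)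
    · apply Integrable.const_mul
      have hb : IntegrableOn
          (fun θ => ((t^2) ^ (-(lam+1))) * Real.sin θ ^ (2*lam-1)) (Set.Ioo 0 Real.pi) :=
        (integrableOn_sin_rpow (by linarith)).const_mul _
      refine Integrable.mono hb ?_ ?_
      · exact (by fun_prop : Measurable fun θ : ℝ => Real.sin θ ^ (2*lam-1) *
          (z ^ 2 + y ^ 2 + t ^ 2 - 2 * z * y * Real.cos θ) ^ (-(lam+1))).aestronglyMeasurable.restrict
      · filter_upwards [ae_restrict_mem measurableSet_Ioo] with θ hθ
        have hs : (0:ℝ) ≤ Real.sin θ ^ (2*lam-1) :=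
          Real.rpow_nonneg (hsin_nonneg θ hθ) _
        have hPz : (z ^ 2 + y ^ 2 + t ^ 2 - 2 * z * y * Real.cos θ) ^ (-(lam+1))
            ≤ ((t^2) ^ (-(lam+1))) :=
          Real.rpow_le_rpow_of_nonpos (by positivity) (hAz θ) (by linarith)
        rw [Real.norm_eq_abs, Real.norm_eq_abs,
          abs_of_nonneg (mul_nonneg hs (Real.rpow_nonneg (hAzp θ).le _)),
          abs_of_nonneg (mul_nonneg (Real.rpow_nonneg (by positivity) _) hs)]
        calc Real.sin θ ^ (2*lam-1) *
              (z ^ 2 + y ^ 2 + t ^ 2 - 2 * z * y * Real.cos θ) ^ (-(lam+1))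
            ≤ Real.sin θ ^ (2*lam-1) * ((t^2) ^ (-(lam+1))) :=
              mul_le_mul_of_nonneg_left hPz hs
          _ = ((t^2) ^ (-(lam+1))) * Real.sin θ ^ (2*lam-1) := mul_comm _ _
    · filter_upwards [ae_restrict_mem measurableSet_Ioo] with θ hθ
      have hs : (0:ℝ) ≤ Real.sin θ ^ (2*lam-1) :=
        Real.rpow_nonneg (hsin_nonneg θ hθ) _
      calc Real.sin θ ^ (2*lam-1) *
            (x ^ 2 + y ^ 2 + t ^ 2 - 2 * x * y * Real.cos θ) ^ (-(lam+1))
          ≤ Real.sin θ ^ (2*lam-1) * ((19:ℝ)^(lam+1) *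
            (z ^ 2 + y ^ 2 + t ^ 2 - 2 * z * y * Real.cos θ) ^ (-(lam+1))) :=
            mul_le_mul_of_nonneg_left (hpt θ) hs
        _ = (19:ℝ)^(lam+1) * (Real.sin θ ^ (2*lam-1) *
            (z ^ 2 + y ^ 2 + t ^ 2 - 2 * z * y * Real.cos θ) ^ (-(lam+1))) := by ring
  have hC0 : (0:ℝ) ≤ 2 * lam * t / Real.pi := by positivity
  calc 2 * lam * t / Real.pi * ∫ θ in Set.Ioo (0:ℝ) Real.pi, Real.sin θ ^ (2*lam-1) *
        (x ^ 2 + y ^ 2 + t ^ 2 - 2 * x * y * Real.cos θ) ^ (-(lam+1))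
      ≤ 2 * lam * t / Real.pi * ((19:ℝ)^(lam+1) * ∫ θ in Set.Ioo (0:ℝ) Real.pi,
        Real.sin θ ^ (2*lam-1) *
        (z ^ 2 + y ^ 2 + t ^ 2 - 2 * z * y * Real.cos θ) ^ (-(lam+1))) :=
        mul_le_mul_of_nonneg_left hI hC0
    _ = (19:ℝ)^(lam+1) * (2 * lam * t / Real.pi * ∫ θ in Set.Ioo (0:ℝ) Real.pi,
        Real.sin θ ^ (2*lam-1) *
        (z ^ 2 + y ^ 2 + t ^ 2 - 2 * z * y * Real.cos θ) ^ (-(lam+1))) := by ring
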